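/- Fix x ∈ R^N, h > 0, and u : R^N → R continuous. Among all pairs (G, H) with G ∈ R^N and H ∈ Sym(R^{N×N}) minimizing (1/2)∫_{hS^{N-1}} (u(x+z) - u(x) - Gᵀz - (1/2)zᵀHz)² dH^{N-1}(z), the Hessian part of the minimizer is given explicitly by H' = (1/2) C₁₂^{-1} h^{-(N-1)} ∫_{hS^{N-1}} ((u(x+z) - 2u(x) + u(x-z))/|z|²) (zzᵀ/|z|² − I/(N+2)) dH^{N-1}(z), where C₁₂ = |S^{N-1}|/(N(N+2)). -/

import Mathlib

open MeasureTheory Metric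
open scoped Pointwise

variable {N : ℕ}

/-- The linear map acting as an orthogonal 2×2 matrix on coordinates `i j`. -/
noncomputable def rot2L (i j : Fin N) (a b c d : ℝ) :
    EuclideanSpace ℝ (Fin N) →ₗ[ℝ] EuclideanSpace ℝ (Fin N) where
  toFun z := WithLp.toLp 2 (fun k => if k = i then a * z i + b * z j
    else if k = j then c * z i + d * z j else z k)
  map_add' z w := by
    ext k
    simp only [PiLp.add_apply]
    split_ifs <;> ring
  map_smul' t z := by
    ext k
    simp only [PiLp.smul_apply, smul_eq_mul, RingHom.id_apply]
    split_ifs <;> ring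

theorem rot2L_apply (i j : Fin N) (a b c d : ℝ) (z : EuclideanSpace ℝ (Fin N)) (k : Fin N) :
    rot2L i j a b c d z k = if k = i then a * z i + b * z j
      else if k = j then c * z i + d * z j else z k := rfl

theorem sum_sq_rot2 (i j : Fin N) (hij : i ≠ j) (a b c d : ℝ)
    (ha : a ^ 2 + c ^ 2 = 1) (hb : b ^ 2 + d ^ 2 = 1) (hab : a * b + c * d = 0)
    (z : EuclideanSpace ℝ (Fin N)) :
    ∑ k, (rot2L i j a b c d z k) ^ 2 = ∑ k, (z k) ^ 2 := by
  have hi : i ∈ Finset.univ := Finset.mem_univ i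
  have hj : j ∈ Finset.univ.erase i := Finset.mem_erase.2 ⟨hij.symm, Finset.mem_univ j⟩
  rw [← Finset.add_sum_erase _ _ hi, ← Finset.add_sum_erase _ _ hj,
    ← Finset.add_sum_erase _ (fun k => (z k) ^ 2) hi,
    ← Finset.add_sum_erase _ (fun k => (z k) ^ 2) hj]
  have hrest : ∑ k ∈ (Finset.univ.erase i).erase j, (rot2L i j a b c d z k) ^ 2
      = ∑ k ∈ (Finset.univ.erase i).erase j, (z k) ^ 2 := by
    refine Finset.sum_congr rfl fun k hk => ?_
    rw [Finset.mem_erase, Finset.mem_erase] at hk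
    rw [rot2L_apply, if_neg hk.2.1, if_neg hk.1]
  rw [hrest, rot2L_apply, rot2L_apply, if_pos rfl, if_neg hij.symm, if_pos rfl]
  have : (a * z i + b * z j) ^ 2 + (c * z i + d * z j) ^ 2 = z i ^ 2 + z j ^ 2 := by
    linear_combination (z i ^ 2) * ha + (z j ^ 2) * hb + (2 * z i * z j) * hab
  linarith [this]

/-- The two-coordinate rotation as a linear isometry equivalence. -/
noncomputable def rot2 (i j : Fin N) (hij : i ≠ j) (a b c d : ℝ)
    (ha : a ^ 2 + c ^ 2 = 1) (hb : b ^ 2 + d ^ 2 = 1) (hab : a * b + c * d = 0) :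
    EuclideanSpace ℝ (Fin N) ≃ₗᵢ[ℝ] EuclideanSpace ℝ (Fin N) :=
  LinearIsometry.toLinearIsometryEquiv
    ⟨rot2L i j a b c d, fun z => by
      rw [EuclideanSpace.norm_eq, EuclideanSpace.norm_eq]
      congr 1
      simp only [Real.norm_eq_abs, sq_abs]
      exact sum_sq_rot2 i j hij a b c d ha hb hab z⟩ rfl

theorem rot2_apply (i j : Fin N) (hij : i ≠ j) (a b c d : ℝ)
    (ha : a ^ 2 + c ^ 2 = 1) (hb : b ^ 2 + d ^ 2 = 1) (hab : a * b + c * d = 0)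
    (z : EuclideanSpace ℝ (Fin N)) (k : Fin N) :
    rot2 i j hij a b c d ha hb hab z k = if k = i then a * z i + b * z j
      else if k = j then c * z i + d * z j else z k := rfl

variable {N : ℕ}

theorem sphere_integral_comp (d h : ℝ)
    (e : EuclideanSpace ℝ (Fin N) ≃ₗᵢ[ℝ] EuclideanSpace ℝ (Fin N))
    (f : EuclideanSpace ℝ (Fin N) → ℝ) :
    ∫ z in sphere (0 : EuclideanSpace ℝ (Fin N)) h, f (e z) ∂μH[d]
      = ∫ z in sphere (0 : EuclideanSpace ℝ (Fin N)) h, f z ∂μH[d] := by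
  have hpre : (e : EuclideanSpace ℝ (Fin N) → EuclideanSpace ℝ (Fin N)) ⁻¹'
      sphere (0 : EuclideanSpace ℝ (Fin N)) h = sphere 0 h := by
    ext z
    simp [mem_sphere_zero_iff_norm, e.norm_map]
  have := (e.toIsometryEquiv.measurePreserving_hausdorffMeasure d).setIntegral_preimage_emb
    e.toIsometryEquiv.toHomeomorph.measurableEmbedding f (sphere 0 h)
  rw [← this]
  rw [show (e.toIsometryEquiv : _ → _) ⁻¹' sphere 0 h = sphere 0 h from hpre]
  rfl

theorem sphere_integral_zero_of_comp_neg (d h : ℝ)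
    (e : EuclideanSpace ℝ (Fin N) ≃ₗᵢ[ℝ] EuclideanSpace ℝ (Fin N))
    (f : EuclideanSpace ℝ (Fin N) → ℝ) (hf : ∀ z, f (e z) = - f z) :
    ∫ z in sphere (0 : EuclideanSpace ℝ (Fin N)) h, f z ∂μH[d] = 0 := by
  have h1 := sphere_integral_comp d h e f
  have h2 : ∫ z in sphere (0 : EuclideanSpace ℝ (Fin N)) h, f (e z) ∂μH[d]
      = - ∫ z in sphere (0 : EuclideanSpace ℝ (Fin N)) h, f z ∂μH[d] := by
    rw [show (fun z => f (e z)) = fun z => - f z from funext hf]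
    exact integral_neg f
  rw [h2] at h1
  linarith

/-- negation as a linear isometry equiv -/
noncomputable def negE : EuclideanSpace ℝ (Fin N) ≃ₗᵢ[ℝ] EuclideanSpace ℝ (Fin N) :=
  LinearIsometryEquiv.neg ℝ

theorem negE_apply (z : EuclideanSpace ℝ (Fin N)) (k : Fin N) : negE z k = - z k := rfl

theorem integrableOn_sphere (d h : ℝ)
    (hfin : μH[d] (sphere (0 : EuclideanSpace ℝ (Fin N)) h) ≠ ⊤)
    (f : EuclideanSpace ℝ (Fin N) → ℝ) (hf : Continuous f) :
    IntegrableOn f (sphere (0 : EuclideanSpace ℝ (Fin N)) h) μH[d] := by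
  obtain ⟨C, hC⟩ := (isCompact_sphere (0 : EuclideanSpace ℝ (Fin N)) h).exists_bound_of_continuousOn
    hf.continuousOn
  have hmeas : MeasurableSet (sphere (0 : EuclideanSpace ℝ (Fin N)) h) :=
    isClosed_sphere.measurableSet
  have hμ : μH[d].restrict (sphere (0 : EuclideanSpace ℝ (Fin N)) h) Set.univ < ⊤ := by
    rw [Measure.restrict_apply MeasurableSet.univ, Set.univ_inter]
    exact lt_top_iff_ne_top.2 hfin
  refine Integrable.mono' (g := fun _ => C) ?_ (hf.aestronglyMeasurable) ?_
  · exact integrable_const_iff.2 (Or.inr ⟨hμ⟩)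
  · exact ae_restrict_of_forall_mem hmeas fun z hz => hC z hz
theorem contc (a : Fin N) : Continuous fun z : EuclideanSpace ℝ (Fin N) => z a :=
  by fun_prop

theorem norm_sq_on_sphere {h : ℝ} {z : EuclideanSpace ℝ (Fin N)}
    (hz : z ∈ sphere (0 : EuclideanSpace ℝ (Fin N)) h) : ∑ k, z k ^ 2 = h ^ 2 := by
  have h1 : ‖z‖ = h := by rwa [mem_sphere_zero_iff_norm] at hz
  have h2 : ‖z‖ ^ 2 = ∑ k, z k ^ 2 := by
    rw [EuclideanSpace.norm_eq, Real.sq_sqrt (Finset.sum_nonneg fun k _ => sq_nonneg _)]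
    simp [Real.norm_eq_abs, sq_abs]
  rw [← h2, h1]

theorem flip_eval (m p : Fin N) (hmp : m ≠ p) (z : EuclideanSpace ℝ (Fin N)) (a : Fin N) :
    rot2 m p hmp (-1) 0 0 1 (by norm_num) (by norm_num) (by norm_num) z a
      = if a = m then - z a else z a := by
  rw [rot2_apply]
  split_ifs with h1 h2
  · rw [h1]; ring
  · rw [h2]; ring
  · rfl

theorem mom4_zero (h : ℝ) (k l i j m p : Fin N) (hmp : m ≠ p)
    (hodd : (((if k = m then 1 else 0) + (if l = m then 1 else 0)
      + (if i = m then 1 else 0) + (if j = m then 1 else 0) : ℕ)) % 2 = 1) :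
    ∫ z in sphere (0 : EuclideanSpace ℝ (Fin N)) h,
      z k * z l * z i * z j ∂μH[(N : ℝ) - 1] = 0 := by
  apply sphere_integral_zero_of_comp_neg ((N : ℝ) - 1) h
    (rot2 m p hmp (-1) 0 0 1 (by norm_num) (by norm_num) (by norm_num))
  intro z
  rw [flip_eval, flip_eval, flip_eval, flip_eval]
  split_ifs at hodd ⊢ <;> first | ring | norm_num at hodd

theorem mom_diag_eq (h : ℝ) (a b : Fin N) :
    ∫ z in sphere (0 : EuclideanSpace ℝ (Fin N)) h, (z a) ^ 4 ∂μH[(N : ℝ) - 1]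
      = ∫ z in sphere (0 : EuclideanSpace ℝ (Fin N)) h, (z b) ^ 4 ∂μH[(N : ℝ) - 1] := by
  rcases eq_or_ne a b with rfl | hab
  · rfl
  · have := sphere_integral_comp (N := N) ((N : ℝ) - 1) h
      (rot2 a b hab 0 1 1 0 (by norm_num) (by norm_num) (by norm_num))
      (fun z => (z a) ^ 4)
    rw [← this]
    refine setIntegral_congr_fun isClosed_sphere.measurableSet fun z _ => ?_
    have : rot2 a b hab 0 1 1 0 (by norm_num) (by norm_num) (by norm_num) z a = z b := by
      rw [rot2_apply, if_pos rfl]; ring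
    rw [this]

theorem mom_offdiag (h : ℝ)
    (hfin : μH[(N : ℝ) - 1] (sphere (0 : EuclideanSpace ℝ (Fin N)) h) ≠ ⊤)
    (a b : Fin N) (hab : a ≠ b) :
    ∫ z in sphere (0 : EuclideanSpace ℝ (Fin N)) h,
        z a * z a * z b * z b ∂μH[(N : ℝ) - 1]
      = (∫ z in sphere (0 : EuclideanSpace ℝ (Fin N)) h, (z a) ^ 4 ∂μH[(N : ℝ) - 1]) / 3 := by
  set s : ℝ := Real.sqrt 2 / 2 with hs_def
  have hs : s ^ 2 = 1 / 2 := by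
    rw [hs_def, div_pow, Real.sq_sqrt (by norm_num : (2:ℝ) ≥ 0)]; norm_num
  have ha : s ^ 2 + s ^ 2 = 1 := by rw [hs]; norm_num
  have hab2 : s * s + s * (-s) = 0 := by ring
  have hb : s ^ 2 + (-s) ^ 2 = 1 := by rw [neg_pow]; simp [hs]; norm_num
  have h1 : ∫ z in sphere (0 : EuclideanSpace ℝ (Fin N)) h,
      (s * z a + s * z b) ^ 4 ∂μH[(N : ℝ) - 1]
      = ∫ z in sphere (0 : EuclideanSpace ℝ (Fin N)) h, (z a) ^ 4 ∂μH[(N : ℝ) - 1] := by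
    have := sphere_integral_comp (N := N) ((N : ℝ) - 1) h
      (rot2 a b hab s s s (-s) ha hb hab2) (fun z => (z a) ^ 4)
    rw [← this]
    refine setIntegral_congr_fun isClosed_sphere.measurableSet fun z _ => ?_
    have : rot2 a b hab s s s (-s) ha hb hab2 z a = s * z a + s * z b := by
      rw [rot2_apply, if_pos rfl]
    rw [this]
  have hfun : (fun z : EuclideanSpace ℝ (Fin N) => (s * z a + s * z b) ^ 4)
      = fun z => ((1/4) * (z a) ^ 4 + z a * z a * z a * z b)
        + ((3/2) * (z a * z a * z b * z b) + z a * z b * z b * z b)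
        + (1/4) * (z b) ^ 4 := by
    funext z
    have : (s * z a + s * z b) ^ 4 = (s ^ 2) ^ 2 * (z a + z b) ^ 4 := by ring
    rw [this, hs]; ring
  have int1 : IntegrableOn (fun z : EuclideanSpace ℝ (Fin N) => (1/4) * (z a) ^ 4)
      (sphere 0 h) μH[(N : ℝ) - 1] := integrableOn_sphere _ h hfin _ (by fun_prop)
  have int2 : IntegrableOn (fun z : EuclideanSpace ℝ (Fin N) => z a * z a * z a * z b)
      (sphere 0 h) μH[(N : ℝ) - 1] := integrableOn_sphere _ h hfin _ (by fun_prop)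
  have int3 : IntegrableOn (fun z : EuclideanSpace ℝ (Fin N) => (3/2) * (z a * z a * z b * z b))
      (sphere 0 h) μH[(N : ℝ) - 1] := integrableOn_sphere _ h hfin _ (by fun_prop)
  have int4 : IntegrableOn (fun z : EuclideanSpace ℝ (Fin N) => z a * z b * z b * z b)
      (sphere 0 h) μH[(N : ℝ) - 1] := integrableOn_sphere _ h hfin _ (by fun_prop)
  have int5 : IntegrableOn (fun z : EuclideanSpace ℝ (Fin N) => (1/4) * (z b) ^ 4)
      (sphere 0 h) μH[(N : ℝ) - 1] := integrableOn_sphere _ h hfin _ (by fun_prop)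
  rw [hfun] at h1
  have int12 : IntegrableOn (fun z : EuclideanSpace ℝ (Fin N) =>
      (1/4) * (z a) ^ 4 + z a * z a * z a * z b) (sphere 0 h) μH[(N : ℝ) - 1] := int1.add int2
  have int34 : IntegrableOn (fun z : EuclideanSpace ℝ (Fin N) =>
      (3/2) * (z a * z a * z b * z b) + z a * z b * z b * z b) (sphere 0 h) μH[(N : ℝ) - 1] :=
    int3.add int4
  have int1234 : IntegrableOn (fun z : EuclideanSpace ℝ (Fin N) =>
      ((1/4) * (z a) ^ 4 + z a * z a * z a * z b)
        + ((3/2) * (z a * z a * z b * z b) + z a * z b * z b * z b)) (sphere 0 h)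
      μH[(N : ℝ) - 1] := int12.add int34
  rw [integral_add int1234 int5, integral_add int12 int34,
    integral_add int1 int2, integral_add int3 int4,
    integral_const_mul, integral_const_mul, integral_const_mul] at h1
  have hz1 : ∫ z in sphere (0 : EuclideanSpace ℝ (Fin N)) h,
      z a * z a * z a * z b ∂μH[(N : ℝ) - 1] = 0 :=
    mom4_zero h a a a b b a hab.symm (by simp [hab])
  have hz2 : ∫ z in sphere (0 : EuclideanSpace ℝ (Fin N)) h,
      z a * z b * z b * z b ∂μH[(N : ℝ) - 1] = 0 :=
    mom4_zero h a b b b a b hab (by simp [hab.symm])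
  have hM : ∫ z in sphere (0 : EuclideanSpace ℝ (Fin N)) h, (z b) ^ 4 ∂μH[(N : ℝ) - 1]
      = ∫ z in sphere (0 : EuclideanSpace ℝ (Fin N)) h, (z a) ^ 4 ∂μH[(N : ℝ) - 1] :=
    mom_diag_eq h b a
  rw [hz1, hz2, hM] at h1
  linarith

theorem mom_diag_val (hN : 1 ≤ N) (h : ℝ) (hh : 0 < h)
    (hfin : μH[(N : ℝ) - 1] (sphere (0 : EuclideanSpace ℝ (Fin N)) h) ≠ ⊤) (a : Fin N) :
    ∫ z in sphere (0 : EuclideanSpace ℝ (Fin N)) h, (z a) ^ 4 ∂μH[(N : ℝ) - 1]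
      = 3 * (h ^ 4 * (μH[(N : ℝ) - 1] (sphere (0 : EuclideanSpace ℝ (Fin N)) h)).toReal
          / ((N : ℝ) * ((N : ℝ) + 2))) := by
  set M := ∫ z in sphere (0 : EuclideanSpace ℝ (Fin N)) h, (z a) ^ 4 ∂μH[(N : ℝ) - 1] with hM
  set Sh := (μH[(N : ℝ) - 1] (sphere (0 : EuclideanSpace ℝ (Fin N)) h)).toReal with hSh
  have hsum : ∫ z in sphere (0 : EuclideanSpace ℝ (Fin N)) h,
      (∑ k, (z k) ^ 2) ^ 2 ∂μH[(N : ℝ) - 1] = h ^ 4 * Sh := by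
    rw [setIntegral_congr_fun isClosed_sphere.measurableSet
      (g := fun _ => h ^ 4) (fun z hz => by rw [norm_sq_on_sphere hz]; ring)]
    rw [setIntegral_const, smul_eq_mul, mul_comm]
    rfl
  have hswap : ∫ z in sphere (0 : EuclideanSpace ℝ (Fin N)) h,
      (∑ k, (z k) ^ 2) ^ 2 ∂μH[(N : ℝ) - 1]
      = ∑ k, ∑ l, ∫ z in sphere (0 : EuclideanSpace ℝ (Fin N)) h,
          (z k) ^ 2 * (z l) ^ 2 ∂μH[(N : ℝ) - 1] := by
    have e1 : (fun z : EuclideanSpace ℝ (Fin N) => (∑ k, (z k) ^ 2) ^ 2)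
        = fun z => ∑ k, ∑ l, (z k) ^ 2 * (z l) ^ 2 := by
      funext z
      rw [sq, Finset.sum_mul_sum]
    rw [e1, integral_finset_sum _ (fun k _ =>
      integrableOn_sphere _ h hfin _ (by fun_prop))]
    exact Finset.sum_congr rfl fun k _ => integral_finset_sum _ (fun l _ =>
      integrableOn_sphere _ h hfin _ (by fun_prop))
  have hdiag : ∀ k : Fin N, ∫ z in sphere (0 : EuclideanSpace ℝ (Fin N)) h,
      (z k) ^ 2 * (z k) ^ 2 ∂μH[(N : ℝ) - 1] = M := by
    intro k
    rw [setIntegral_congr_fun isClosed_sphere.measurableSet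
      (g := fun z => (z k) ^ 4) (fun z _ => by ring)]
    exact mom_diag_eq h k a
  have hoff : ∀ k l : Fin N, k ≠ l → ∫ z in sphere (0 : EuclideanSpace ℝ (Fin N)) h,
      (z k) ^ 2 * (z l) ^ 2 ∂μH[(N : ℝ) - 1] = M / 3 := by
    intro k l hkl
    rw [setIntegral_congr_fun isClosed_sphere.measurableSet
      (g := fun z => z k * z k * z l * z l) (fun z _ => by ring)]
    rw [mom_offdiag h hfin k l hkl, mom_diag_eq h k a]
  have hinner : ∀ k : Fin N, ∑ l, ∫ z in sphere (0 : EuclideanSpace ℝ (Fin N)) h,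
      (z k) ^ 2 * (z l) ^ 2 ∂μH[(N : ℝ) - 1] = M + ((N : ℝ) - 1) * (M / 3) := by
    intro k
    rw [← Finset.add_sum_erase _ _ (Finset.mem_univ k), hdiag k]
    congr 1
    rw [Finset.sum_congr rfl (fun l hl => hoff k l (Finset.ne_of_mem_erase hl).symm),
      Finset.sum_const, Finset.card_erase_of_mem (Finset.mem_univ k), Finset.card_univ,
      Fintype.card_fin, nsmul_eq_mul, Nat.cast_sub hN, Nat.cast_one]
  have htot : (N : ℝ) * (M + ((N : ℝ) - 1) * (M / 3)) = h ^ 4 * Sh := by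
    rw [← hsum, hswap, Finset.sum_congr rfl (fun k _ => hinner k), Finset.sum_const,
      Finset.card_univ, Fintype.card_fin, nsmul_eq_mul]
  have hNpos : (0 : ℝ) < N := by exact_mod_cast Nat.pos_of_ne_zero (by omega)
  have hN2 : (N : ℝ) + 2 ≠ 0 := by positivity
  field_simp
  linear_combination ((N : ℝ) + 2)⁻¹ * 0 + 3 * htot

theorem mom4 (hN : 1 ≤ N) (h : ℝ) (hh : 0 < h)
    (hfin : μH[(N : ℝ) - 1] (sphere (0 : EuclideanSpace ℝ (Fin N)) h) ≠ ⊤) (k l i j : Fin N) :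
    ∫ z in sphere (0 : EuclideanSpace ℝ (Fin N)) h, z k * z l * z i * z j ∂μH[(N : ℝ) - 1]
      = (h ^ 4 * (μH[(N : ℝ) - 1] (sphere (0 : EuclideanSpace ℝ (Fin N)) h)).toReal
          / ((N : ℝ) * ((N : ℝ) + 2)))
        * ((if k = l ∧ i = j then 1 else 0) + (if k = i ∧ l = j then 1 else 0)
          + (if k = j ∧ l = i then 1 else 0)) := by
  set C := h ^ 4 * (μH[(N : ℝ) - 1] (sphere (0 : EuclideanSpace ℝ (Fin N)) h)).toReal
      / ((N : ℝ) * ((N : ℝ) + 2)) with hC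
  have Pval : ∀ a b : Fin N, a ≠ b → ∫ z in sphere (0 : EuclideanSpace ℝ (Fin N)) h,
      z a * z a * z b * z b ∂μH[(N : ℝ) - 1] = C := by
    intro a b hab
    rw [mom_offdiag h hfin a b hab, mom_diag_val hN h hh hfin a]
    ring
  by_cases hkl : k = l
  · subst hkl
    by_cases hij : i = j
    · subst hij
      by_cases hki : k = i
      · subst hki
        rw [setIntegral_congr_fun isClosed_sphere.measurableSet
          (g := fun z => (z k) ^ 4) (fun z _ => by ring), mom_diag_val hN h hh hfin k]
        simp
        ring
      · rw [Pval k i hki]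
        have h2 : ¬ (k = i ∧ k = i) := fun hc => hki hc.1
        simp [hki, h2]
    · have hz : ∫ z in sphere (0 : EuclideanSpace ℝ (Fin N)) h,
          z k * z k * z i * z j ∂μH[(N : ℝ) - 1] = 0 := by
        have hji : j ≠ i := Ne.symm hij
        by_cases hki : k = i
        · have hkj : k ≠ j := by rw [hki]; exact hij
          exact mom4_zero h k k i j j i hji (by simp [hkj, hij])
        · exact mom4_zero h k k i j i j hij (by simp [hki, hji])
      rw [hz]
      have h2 : ¬ (k = i ∧ k = j) := fun hc => hij (hc.1.symm.trans hc.2)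
      have h3 : ¬ (k = j ∧ k = i) := fun hc => hij (hc.2.symm.trans hc.1)
      simp [hij, h2, h3]
  · by_cases hij : i = j
    · subst hij
      have hz : ∫ z in sphere (0 : EuclideanSpace ℝ (Fin N)) h,
          z k * z l * z i * z i ∂μH[(N : ℝ) - 1] = 0 := by
        by_cases hki : k = i
        · have hil : i ≠ l := fun hc => hkl (hki.trans hc)
          exact mom4_zero h k l i i l k (Ne.symm hkl) (by simp [hkl, hil])
        · have hik : i ≠ k := Ne.symm hki
          have hlk : l ≠ k := Ne.symm hkl
          exact mom4_zero h k l i i k l hkl (by simp [hlk, hik])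
      rw [hz]
      have h2 : ¬ (k = i ∧ l = i) := fun hc => hkl (hc.1.trans hc.2.symm)
      simp [hkl, h2]
    · by_cases h1 : k = i ∧ l = j
      · obtain ⟨rfl, rfl⟩ := h1
        rw [setIntegral_congr_fun isClosed_sphere.measurableSet
          (g := fun z => z k * z k * z l * z l) (fun z _ => by ring), Pval k l hkl]
        have h3 : ¬ (k = l ∧ l = k) := fun hc => hkl hc.1
        simp [hkl, hij, h3]
      · by_cases h2 : k = j ∧ l = i
        · obtain ⟨rfl, rfl⟩ := h2
          rw [setIntegral_congr_fun isClosed_sphere.measurableSet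
            (g := fun z => z l * z l * z k * z k) (fun z _ => by ring), Pval l k (Ne.symm hkl)]
          have h3 : ¬ (k = l ∧ l = k) := fun hc => hkl hc.1
          simp [hkl, hij, h3]
        · have hz : ∫ z in sphere (0 : EuclideanSpace ℝ (Fin N)) h,
              z k * z l * z i * z j ∂μH[(N : ℝ) - 1] = 0 := by
            by_cases hki : k = i
            · have hlj : l ≠ j := fun hc => h1 ⟨hki, hc⟩
              have hli : l ≠ i := fun hc => hkl (hki.trans hc.symm)
              exact mom4_zero h k l i j l k (Ne.symm hkl)
                (by simp [hkl, Ne.symm hli, Ne.symm hlj])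
            · by_cases hkj : k = j
              · have hli : l ≠ i := fun hc => h2 ⟨hkj, hc⟩
                have hlj : l ≠ j := fun hc => hkl (hkj.trans hc.symm)
                exact mom4_zero h k l i j l k (Ne.symm hkl)
                  (by simp [hkl, Ne.symm hli, Ne.symm hlj])
              · have hik : i ≠ k := Ne.symm hki
                have hjk : j ≠ k := Ne.symm hkj
                have hlk : l ≠ k := Ne.symm hkl
                exact mom4_zero h k l i j k l hkl (by simp [hlk, hik, hjk])
          rw [hz]
          simp [hij, h1, h2]

theorem quad_mom (hN : 1 ≤ N) (h : ℝ) (hh : 0 < h)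
    (hfin : μH[(N : ℝ) - 1] (sphere (0 : EuclideanSpace ℝ (Fin N)) h) ≠ ⊤)
    (Hm : Matrix (Fin N) (Fin N) ℝ) (i j : Fin N) :
    ∫ z in sphere (0 : EuclideanSpace ℝ (Fin N)) h,
        (∑ k, ∑ l, z k * Hm k l * z l) * (z i * z j) ∂μH[(N : ℝ) - 1]
      = (h ^ 4 * (μH[(N : ℝ) - 1] (sphere (0 : EuclideanSpace ℝ (Fin N)) h)).toReal
          / ((N : ℝ) * ((N : ℝ) + 2)))
        * ((if i = j then (∑ k, Hm k k) else 0) + Hm i j + Hm j i) := by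
  set C := h ^ 4 * (μH[(N : ℝ) - 1] (sphere (0 : EuclideanSpace ℝ (Fin N)) h)).toReal
      / ((N : ℝ) * ((N : ℝ) + 2)) with hC
  have e1 : (fun z : EuclideanSpace ℝ (Fin N) => (∑ k, ∑ l, z k * Hm k l * z l) * (z i * z j))
      = fun z => ∑ k, ∑ l, Hm k l * (z k * z l * z i * z j) := by
    funext z
    rw [Finset.sum_mul]
    refine Finset.sum_congr rfl fun k _ => ?_
    rw [Finset.sum_mul]
    exact Finset.sum_congr rfl fun l _ => by ring
  rw [e1, integral_finset_sum _ (fun k _ => integrableOn_sphere _ h hfin _ (by fun_prop)),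
    Finset.sum_congr rfl (fun k (_ : k ∈ Finset.univ) => integral_finset_sum _
      (fun l _ => integrableOn_sphere _ h hfin _ (by fun_prop))),
    Finset.sum_congr rfl (fun k (_ : k ∈ Finset.univ) => Finset.sum_congr rfl
      (fun l (_ : l ∈ Finset.univ) => by
        rw [integral_const_mul, mom4 hN h hh hfin k l i j]))]
  by_cases hij : i = j
  · subst hij
    simp only [and_true, eq_self_iff_true, if_true, ite_and]
    simp [mul_add, Finset.sum_add_distrib, Finset.mul_sum, Finset.sum_ite_eq,
      Finset.sum_ite_eq', mul_ite, mul_one, mul_zero]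
    simp only [hC]
    ring_nf
    simp [mul_comm]
    exact Finset.sum_congr rfl fun _ _ => by ring
  · simp only [hij, and_false, if_false, ite_and]
    simp [mul_add, Finset.sum_add_distrib, Finset.sum_ite_eq, Finset.sum_ite_eq',
      mul_ite, mul_one, mul_zero]
    ring

theorem sphere_meas_pos (hN : 1 ≤ N) :
    μH[(N : ℝ) - 1] (sphere (0 : EuclideanSpace ℝ (Fin N)) 1) ≠ 0 := by
  classical
  set d : ℝ := (N : ℝ) - 1 with hd_def
  have hd0 : 0 ≤ d := by
    rw [hd_def]; have : (1:ℝ) ≤ N := by exact_mod_cast hN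
    linarith
  have hdnat : d = ((N - 1 : ℕ) : ℝ) := by
    rw [hd_def, Nat.cast_sub hN, Nat.cast_one]
  set E' := EuclideanSpace ℝ (Fin (N - 1))
  set π : EuclideanSpace ℝ (Fin N) → E' :=
    fun z => WithLp.toLp 2 (fun m => z (Fin.castLE (by omega) m)) with hπ
  -- π is 1-Lipschitz
  have hlip : LipschitzWith 1 π := by
    refine LipschitzWith.of_dist_le_mul fun a b => ?_
    simp only [NNReal.coe_one, one_mul]
    rw [EuclideanSpace.dist_eq, EuclideanSpace.dist_eq]
    apply Real.sqrt_le_sqrt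
    simp only [Real.dist_eq, sq_abs]
    have : ∑ m : Fin (N - 1), (π a m - π b m) ^ 2
        = ∑ k ∈ Finset.univ.image (Fin.castLE (show N - 1 ≤ N by omega)),
            (a k - b k) ^ 2 := by
      rw [Finset.sum_image (fun x _ y _ hxy => Fin.castLE_injective _ hxy)]
    rw [this]
    exact Finset.sum_le_sum_of_subset_of_nonneg (Finset.subset_univ _)
      (fun k _ _ => sq_nonneg _)
  -- the ball is contained in the image of the sphere
  have hsub : ball (0 : E') (1/2) ⊆ π '' sphere (0 : EuclideanSpace ℝ (Fin N)) 1 := by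
    intro y hy
    have hy1 : ‖y‖ ≤ 1 := by
      have := mem_ball_zero_iff.1 hy
      linarith
    have hysq : ‖y‖ ^ 2 ≤ 1 := by nlinarith [norm_nonneg y]
    set z : EuclideanSpace ℝ (Fin N) := WithLp.toLp 2 (fun k =>
      if hk : (k : ℕ) < N - 1 then y ⟨k, hk⟩ else Real.sqrt (1 - ‖y‖ ^ 2)) with hz
    have hnormy : ∑ m, y m ^ 2 = ‖y‖ ^ 2 := by
      rw [EuclideanSpace.norm_eq, Real.sq_sqrt (Finset.sum_nonneg fun m _ => sq_nonneg _)]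
      simp [Real.norm_eq_abs, sq_abs]
    refine ⟨z, ?_, ?_⟩
    · rw [mem_sphere_zero_iff_norm, EuclideanSpace.norm_eq]
      have hsum : ∑ k, ‖z k‖ ^ 2 = 1 := by
        simp only [Real.norm_eq_abs, sq_abs]
        have himg : ∀ k : Fin N, k ∈ Finset.univ.image
            (Fin.castLE (show N - 1 ≤ N by omega)) ↔ (k : ℕ) < N - 1 := by
          intro k
          simp only [Finset.mem_image, Finset.mem_univ, true_and]
          constructor
          · rintro ⟨m, rfl⟩; exact m.2
          · intro hk; exact ⟨⟨k, hk⟩, rfl⟩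
        rw [← Finset.sum_sdiff (Finset.subset_univ
          (Finset.univ.image (Fin.castLE (show N - 1 ≤ N by omega))))]
        have h1 : ∑ k ∈ Finset.univ.image (Fin.castLE (show N - 1 ≤ N by omega)),
            z k ^ 2 = ‖y‖ ^ 2 := by
          rw [Finset.sum_image (fun x _ y _ hxy => Fin.castLE_injective _ hxy)]
          rw [← hnormy]
          refine Finset.sum_congr rfl fun m _ => ?_
          have hm : ((Fin.castLE (show N - 1 ≤ N by omega) m : Fin N) : ℕ) < N - 1 := m.2
          rw [hz]
          simp only [dif_pos hm]
          congr 1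
        have h2 : Finset.univ \ Finset.univ.image
            (Fin.castLE (show N - 1 ≤ N by omega)) = {(⟨N - 1, by omega⟩ : Fin N)} := by
          ext k
          simp only [Finset.mem_sdiff, Finset.mem_univ, true_and, himg, Finset.mem_singleton,
            not_lt]
          constructor
          · intro hk
            have hk2 : (k : ℕ) < N := k.2
            have hk' : (k : ℕ) = N - 1 := by omega
            exact Fin.ext (by simp [hk'])
          · intro hk; rw [hk]
        rw [h1, h2, Finset.sum_singleton]
        have hni : ¬ ((⟨N - 1, by omega⟩ : Fin N) : ℕ) < N - 1 := by simp
        rw [hz]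
        simp only [dif_neg hni]
        rw [Real.sq_sqrt (by linarith)]
        ring
      rw [hsum, Real.sqrt_one]
    · refine PiLp.ext (p := 2) fun m => ?_
      have hm : ((Fin.castLE (show N - 1 ≤ N by omega) m : Fin N) : ℕ) < N - 1 := m.2
      show z.ofLp (Fin.castLE _ m) = y.ofLp m
      rw [hz]
      simp only [dif_pos hm]
      rfl
  -- positivity of the ball measure in E'
  have hball : 0 < μH[d] (ball (0 : E') (1/2)) := by
    have hrank : d = ((Module.finrank ℝ E' : ℕ) : ℝ) := by
      rw [hdnat]
      congr 1
      rw [finrank_euclideanSpace_fin]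
    rw [hrank]
    exact isOpen_ball.measure_pos _ ⟨0, by simp⟩
  -- combine
  intro hzero
  have himle := hlip.hausdorffMeasure_image_le hd0 (sphere (0 : EuclideanSpace ℝ (Fin N)) 1)
  rw [hzero] at himle
  simp only [mul_zero] at himle
  have : μH[d] (ball (0 : E') (1/2)) = 0 :=
    le_antisymm (le_trans (measure_mono hsub) (le_trans himle (by simp))) (by positivity)
  rw [this] at hball
  exact lt_irrefl _ hball

theorem sphere_scale (hN : 1 ≤ N) (h : ℝ) (hh : 0 < h) :
    μH[(N : ℝ) - 1] (sphere (0 : EuclideanSpace ℝ (Fin N)) h)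
      = ‖h‖₊ ^ ((N : ℝ) - 1) • μH[(N : ℝ) - 1] (sphere (0 : EuclideanSpace ℝ (Fin N)) 1) := by
  have hd0 : 0 ≤ (N : ℝ) - 1 := by
    have : (1:ℝ) ≤ N := by exact_mod_cast hN
    linarith
  haveI : Nonempty (Fin N) := ⟨⟨0, hN⟩⟩
  have hs : h • sphere (0 : EuclideanSpace ℝ (Fin N)) 1
      = sphere (0 : EuclideanSpace ℝ (Fin N)) h := by
    rw [_root_.smul_sphere h (0 : EuclideanSpace ℝ (Fin N)) zero_le_one, smul_zero,
      Real.norm_of_nonneg hh.le, mul_one]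
  rw [← hs, Measure.hausdorffMeasure_smul₀ hd0 (ne_of_gt hh)]

theorem sphere_scale_toReal (hN : 1 ≤ N) (h : ℝ) (hh : 0 < h) :
    (μH[(N : ℝ) - 1] (sphere (0 : EuclideanSpace ℝ (Fin N)) h)).toReal
      = h ^ (N - 1) * (μH[(N : ℝ) - 1] (sphere (0 : EuclideanSpace ℝ (Fin N)) 1)).toReal := by
  rw [sphere_scale hN h hh]
  rw [ENNReal.smul_def, smul_eq_mul, ENNReal.toReal_mul]
  congr 1
  rw [ENNReal.coe_toReal, NNReal.coe_rpow, coe_nnnorm, Real.norm_of_nonneg hh.le]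
  rw [show (N : ℝ) - 1 = ((N - 1 : ℕ) : ℝ) by rw [Nat.cast_sub hN, Nat.cast_one]]
  exact Real.rpow_natCast h (N - 1)

theorem sphere_one_ne_top (hN : 1 ≤ N) (h : ℝ) (hh : 0 < h)
    (hfin : μH[(N : ℝ) - 1] (sphere (0 : EuclideanSpace ℝ (Fin N)) h) ≠ ⊤) :
    μH[(N : ℝ) - 1] (sphere (0 : EuclideanSpace ℝ (Fin N)) 1) ≠ ⊤ := by
  intro htop
  apply hfin
  rw [sphere_scale hN h hh, htop, ENNReal.smul_def, smul_eq_mul]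
  rw [ENNReal.mul_top]
  simp only [ne_eq, ENNReal.coe_eq_zero]
  rw [NNReal.rpow_eq_zero_iff]
  push_neg
  intro hc
  exact absurd (nnnorm_eq_zero.1 hc) (ne_of_gt hh)

theorem trace_sum {N : ℕ} (c : ℝ) (T : Fin N → ℝ) :
    ∑ k, c * ((∑ m, T m) + 2 * T k) = c * ((N : ℝ) * (∑ m, T m) + 2 * (∑ m, T m)) := by
  calc ∑ k, c * ((∑ m, T m) + 2 * T k)
      = ∑ k : Fin N, (c * (∑ m, T m) + (2 * c) * T k) :=
        Finset.sum_congr rfl fun k _ => by ring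
    _ = (Finset.univ : Finset (Fin N)).card • (c * (∑ m, T m)) + (2 * c) * (∑ m, T m) := by
        rw [Finset.sum_add_distrib, Finset.sum_const, ← Finset.mul_sum]
    _ = c * ((N : ℝ) * (∑ m, T m) + 2 * (∑ m, T m)) := by
        rw [Finset.card_univ, Fintype.card_fin, nsmul_eq_mul]
        ring

set_option maxHeartbeats 2000000 in
/-- The Hessian part of any minimizer of the spherical least-squares problem
`min_{G, H symmetric} (1/2) ∫_{hS^{N-1}} (u(x+z) - u(x) - Gᵀz - (1/2) zᵀHz)² dH^{N-1}(z)`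
is given explicitly by
`H' = (1/2) C₁₂⁻¹ h^{-(N-1)} ∫_{hS^{N-1}} ((u(x+z) - 2u(x) + u(x-z))/|z|²)
      (zzᵀ/|z|² − I/(N+2)) dH^{N-1}(z)`, where `C₁₂ = |S^{N-1}|/(N(N+2))`. -/
theorem implicit_nonlocal_hessian_on_sphere (N : ℕ) (hN : 1 ≤ N)
    (x : EuclideanSpace ℝ (Fin N)) (h : ℝ) (hh : 0 < h)
    (u : EuclideanSpace ℝ (Fin N) → ℝ) (hu : Continuous u)
    (hint : ∀ (G : Fin N → ℝ) (Hm : Matrix (Fin N) (Fin N) ℝ),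
      IntegrableOn (fun z : EuclideanSpace ℝ (Fin N) =>
          (u (x + z) - u x - (∑ i, G i * z i)
            - (1 / 2) * ∑ i, ∑ j, z i * Hm i j * z j) ^ 2)
        (sphere (0 : EuclideanSpace ℝ (Fin N)) h) μH[(N : ℝ) - 1])
    (G' : Fin N → ℝ) (H' : Matrix (Fin N) (Fin N) ℝ) (hsym : H'.IsSymm)
    (hmin : ∀ (G : Fin N → ℝ) (Hm : Matrix (Fin N) (Fin N) ℝ), Hm.IsSymm →
      ((1 : ℝ) / 2) * (∫ z in sphere (0 : EuclideanSpace ℝ (Fin N)) h,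
          (u (x + z) - u x - (∑ i, G' i * z i)
            - (1 / 2) * ∑ i, ∑ j, z i * H' i j * z j) ^ 2 ∂μH[(N : ℝ) - 1])
        ≤ ((1 : ℝ) / 2) * ∫ z in sphere (0 : EuclideanSpace ℝ (Fin N)) h,
            (u (x + z) - u x - (∑ i, G i * z i)
              - (1 / 2) * ∑ i, ∑ j, z i * Hm i j * z j) ^ 2 ∂μH[(N : ℝ) - 1]) :
    ∀ i j, H' i j
      = (1 / 2)
        * ((μH[(N : ℝ) - 1] (sphere (0 : EuclideanSpace ℝ (Fin N)) 1)).toReal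
            / ((N : ℝ) * ((N : ℝ) + 2)))⁻¹
        * (h ^ (N - 1))⁻¹
        * ∫ z in sphere (0 : EuclideanSpace ℝ (Fin N)) h,
            ((u (x + z) - 2 * u x + u (x - z)) / ‖z‖ ^ 2)
              * (z i * z j / ‖z‖ ^ 2 - (if i = j then (1 : ℝ) else 0) / ((N : ℝ) + 2))
            ∂μH[(N : ℝ) - 1] := by
  classical
  intro i j
  have hne : h ≠ 0 := ne_of_gt hh
  have hNpos : (0 : ℝ) < N := by exact_mod_cast Nat.pos_of_ne_zero (by omega)
  have hN2 : (N : ℝ) + 2 ≠ 0 := by positivity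
  have hmeas : MeasurableSet (sphere (0 : EuclideanSpace ℝ (Fin N)) h) :=
    isClosed_sphere.measurableSet
  -- abbreviations
  set r : EuclideanSpace ℝ (Fin N) → ℝ := fun z =>
    u (x + z) - u x - (∑ k, G' k * z k) - (1 / 2) * ∑ k, ∑ l, z k * H' k l * z l with hr
  -- Step 1 : the sphere has finite measure
  have hq_int : ∀ Em : Matrix (Fin N) (Fin N) ℝ,
      IntegrableOn (fun z : EuclideanSpace ℝ (Fin N) =>
        (r z - (1 / 2) * ∑ k, ∑ l, z k * Em k l * z l) ^ 2)
      (sphere (0 : EuclideanSpace ℝ (Fin N)) h) μH[(N : ℝ) - 1] := by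
    intro Em
    have h0 := hint G' (H' + Em)
    have hfun : (fun z : EuclideanSpace ℝ (Fin N) =>
        (u (x + z) - u x - (∑ k, G' k * z k)
          - (1 / 2) * ∑ k, ∑ l, z k * (H' + Em) k l * z l) ^ 2)
        = fun z => (r z - (1 / 2) * ∑ k, ∑ l, z k * Em k l * z l) ^ 2 := by
      funext z
      have hsplit : ∑ k, ∑ l, z k * (H' + Em) k l * z l
          = (∑ k, ∑ l, z k * H' k l * z l) + ∑ k, ∑ l, z k * Em k l * z l := by
        rw [← Finset.sum_add_distrib]
        refine Finset.sum_congr rfl fun k _ => ?_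
        rw [← Finset.sum_add_distrib]
        refine Finset.sum_congr rfl fun l _ => ?_
        simp only [Matrix.add_apply]
        ring
      rw [hr, hsplit]
      ring
    rwa [hfun] at h0
  have hone : ∀ z : EuclideanSpace ℝ (Fin N),
      ∑ k, ∑ l, z k * (1 : Matrix (Fin N) (Fin N) ℝ) k l * z l = ∑ k, (z k) ^ 2 := by
    intro z
    refine Finset.sum_congr rfl fun k _ => ?_
    simp [Matrix.one_apply, mul_ite, ite_mul, mul_zero, zero_mul, mul_one,
      Finset.sum_ite_eq, sq]
  have hmone : ∀ z : EuclideanSpace ℝ (Fin N),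
      ∑ k, ∑ l, z k * (-1 : Matrix (Fin N) (Fin N) ℝ) k l * z l = -∑ k, (z k) ^ 2 := by
    intro z
    rw [← Finset.sum_neg_distrib]
    refine Finset.sum_congr rfl fun k _ => ?_
    simp [Matrix.neg_apply, Matrix.one_apply, mul_ite, ite_mul, mul_zero, zero_mul,
      mul_one, Finset.sum_ite_eq, sq]
  have hrint : IntegrableOn (fun z : EuclideanSpace ℝ (Fin N) => (r z) ^ 2)
      (sphere (0 : EuclideanSpace ℝ (Fin N)) h) μH[(N : ℝ) - 1] := hint G' H'
  have h1' : IntegrableOn (fun z : EuclideanSpace ℝ (Fin N) =>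
      (r z - (1/2) * ∑ k, (z k) ^ 2) ^ 2)
      (sphere (0 : EuclideanSpace ℝ (Fin N)) h) μH[(N : ℝ) - 1] := by
    refine (hq_int 1).congr (Filter.Eventually.of_forall fun z => ?_)
    beta_reduce
    rw [hone z]
  have h2' : IntegrableOn (fun z : EuclideanSpace ℝ (Fin N) =>
      (r z + (1/2) * ∑ k, (z k) ^ 2) ^ 2)
      (sphere (0 : EuclideanSpace ℝ (Fin N)) h) μH[(N : ℝ) - 1] := by
    refine (hq_int (-1)).congr (Filter.Eventually.of_forall fun z => ?_)
    beta_reduce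
    rw [hmone z]
    ring
  have h12 : IntegrableOn (fun z : EuclideanSpace ℝ (Fin N) =>
      (r z - (1/2) * ∑ k, (z k) ^ 2) ^ 2 + (r z + (1/2) * ∑ k, (z k) ^ 2) ^ 2)
      (sphere (0 : EuclideanSpace ℝ (Fin N)) h) μH[(N : ℝ) - 1] := h1'.add h2'
  have h12' : IntegrableOn (fun z : EuclideanSpace ℝ (Fin N) =>
      ((r z - (1/2) * ∑ k, (z k) ^ 2) ^ 2 + (r z + (1/2) * ∑ k, (z k) ^ 2) ^ 2) / 2)
      (sphere (0 : EuclideanSpace ℝ (Fin N)) h) μH[(N : ℝ) - 1] := h12.div_const 2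
  have hdiff : IntegrableOn (fun z : EuclideanSpace ℝ (Fin N) =>
      ((r z - (1/2) * ∑ k, (z k) ^ 2) ^ 2 + (r z + (1/2) * ∑ k, (z k) ^ 2) ^ 2) / 2
        - (r z) ^ 2)
      (sphere (0 : EuclideanSpace ℝ (Fin N)) h) μH[(N : ℝ) - 1] := h12'.sub hrint
  have hq2 : IntegrableOn (fun z : EuclideanSpace ℝ (Fin N) =>
      ((1/2) * ∑ k, (z k) ^ 2) ^ 2)
      (sphere (0 : EuclideanSpace ℝ (Fin N)) h) μH[(N : ℝ) - 1] := by
    refine hdiff.congr (Filter.Eventually.of_forall fun z => ?_)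
    beta_reduce
    ring
  have hconst : Integrable (fun _ : EuclideanSpace ℝ (Fin N) => h ^ 4 / 4)
      (μH[(N : ℝ) - 1].restrict (sphere (0 : EuclideanSpace ℝ (Fin N)) h)) := by
    refine hq2.congr (ae_restrict_of_forall_mem hmeas fun z hz => ?_)
    beta_reduce
    rw [norm_sq_on_sphere hz]
    ring
  have hfin : μH[(N : ℝ) - 1] (sphere (0 : EuclideanSpace ℝ (Fin N)) h) ≠ ⊤ := by
    rcases integrable_const_iff.1 hconst with hc | hlt
    · exact absurd hc (by positivity)
    · have hlt := hlt.measure_univ_lt_top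
      rw [Measure.restrict_apply_univ] at hlt
      exact hlt.ne
  have hIC : ∀ f : EuclideanSpace ℝ (Fin N), True := fun _ => trivial
  have hc1 : Continuous fun z : EuclideanSpace ℝ (Fin N) => u (x + z) :=
    hu.comp (by fun_prop)
  have hc2 : Continuous fun z : EuclideanSpace ℝ (Fin N) => u (x - z) :=
    hu.comp (by fun_prop)
  have hrc : Continuous r := by
    rw [hr]
    apply Continuous.sub
    apply Continuous.sub
    apply Continuous.sub hc1 continuous_const
    · fun_prop
    · fun_prop
  -- first variation
  have hfv : ∀ p q : Fin N, ∫ z in sphere (0 : EuclideanSpace ℝ (Fin N)) h,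
      r z * (z p * z q) ∂μH[(N : ℝ) - 1] = 0 := by
    intro p q
    set Epq : Matrix (Fin N) (Fin N) ℝ := fun k l =>
      (if k = p ∧ l = q then (1:ℝ) else 0) + (if k = q ∧ l = p then 1 else 0) with hE
    have hEsymm : Epq.IsSymm := by
      refine Matrix.IsSymm.ext fun k l => ?_
      rw [hE]
      by_cases h1 : k = p <;> by_cases h2 : l = q <;> by_cases h3 : k = q <;>
        by_cases h4 : l = p <;> simp [h1, h2, h3, h4, and_comm, add_comm]
    have hqE : ∀ z : EuclideanSpace ℝ (Fin N),
        (1/2) * ∑ k, ∑ l, z k * Epq k l * z l = z p * z q := by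
      intro z
      have : ∑ k, ∑ l, z k * Epq k l * z l = z p * z q + z q * z p := by
        rw [hE]
        simp only [mul_add, add_mul, mul_ite, ite_mul, mul_one, mul_zero, zero_mul,
          one_mul, Finset.sum_add_distrib, ite_and]
        simp [Finset.sum_ite_irrel, Finset.sum_ite_eq', Finset.mem_univ,
          Finset.sum_const_zero]
      rw [this]
      ring
    set B1 : ℝ := ∫ z in sphere (0 : EuclideanSpace ℝ (Fin N)) h,
      r z * (z p * z q) ∂μH[(N : ℝ) - 1] with hB1
    set B2 : ℝ := ∫ z in sphere (0 : EuclideanSpace ℝ (Fin N)) h,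
      (z p * z q) ^ 2 ∂μH[(N : ℝ) - 1] with hB2def
    have key : ∀ t : ℝ, 0 ≤ -(2*t) * B1 + t^2 * B2 := by
      intro t
      have hsymt : (H' + t • Epq).IsSymm :=
        hsym.add (Matrix.IsSymm.ext fun k l => by
          simp only [Matrix.smul_apply, smul_eq_mul, hEsymm.apply k l])
      have hm := hmin G' (H' + t • Epq) hsymt
      have hfunt : (fun z : EuclideanSpace ℝ (Fin N) =>
          (u (x + z) - u x - (∑ k, G' k * z k)
            - (1/2) * ∑ k, ∑ l, z k * (H' + t • Epq) k l * z l) ^ 2)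
          = fun z => (r z - t * (z p * z q)) ^ 2 := by
        funext z
        have h1 : ∑ k, ∑ l, z k * (H' + t • Epq) k l * z l
            = (∑ k, ∑ l, z k * H' k l * z l) + t * ∑ k, ∑ l, z k * Epq k l * z l := by
          rw [Finset.mul_sum, ← Finset.sum_add_distrib]
          refine Finset.sum_congr rfl fun k _ => ?_
          rw [Finset.mul_sum, ← Finset.sum_add_distrib]
          refine Finset.sum_congr rfl fun l _ => ?_
          simp only [Matrix.add_apply, Matrix.smul_apply, smul_eq_mul]
          ring
        rw [hr, h1, ← hqE z]
        ring
      rw [hfunt] at hm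
      have i2 : IntegrableOn (fun z : EuclideanSpace ℝ (Fin N) =>
          -(2*t) * (r z * (z p * z q)))
          (sphere (0 : EuclideanSpace ℝ (Fin N)) h) μH[(N : ℝ) - 1] :=
        integrableOn_sphere _ h hfin _
          (continuous_const.mul (hrc.mul ((contc p).mul (contc q))))
      have i3 : IntegrableOn (fun z : EuclideanSpace ℝ (Fin N) =>
          t^2 * (z p * z q) ^ 2)
          (sphere (0 : EuclideanSpace ℝ (Fin N)) h) μH[(N : ℝ) - 1] :=
        integrableOn_sphere _ h hfin _ (by fun_prop)
      have i23 : IntegrableOn (fun z : EuclideanSpace ℝ (Fin N) =>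
          -(2*t) * (r z * (z p * z q)) + t^2 * (z p * z q) ^ 2)
          (sphere (0 : EuclideanSpace ℝ (Fin N)) h) μH[(N : ℝ) - 1] := i2.add i3
      have hexp : ∫ z in sphere (0 : EuclideanSpace ℝ (Fin N)) h,
          (r z - t * (z p * z q)) ^ 2 ∂μH[(N : ℝ) - 1]
          = (∫ z in sphere (0 : EuclideanSpace ℝ (Fin N)) h, (r z) ^ 2 ∂μH[(N : ℝ) - 1])
            + (-(2*t) * B1 + t^2 * B2) := by
        have e1 : (fun z : EuclideanSpace ℝ (Fin N) => (r z - t * (z p * z q)) ^ 2)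
            = fun z => (r z) ^ 2
              + (-(2*t) * (r z * (z p * z q)) + t^2 * (z p * z q) ^ 2) := by
          funext z
          ring
        rw [e1, integral_add hrint i23, integral_add i2 i3, integral_const_mul,
          integral_const_mul, hB1, hB2def]
      rw [hexp] at hm
      linarith
    have hB2 : 0 ≤ B2 := setIntegral_nonneg hmeas fun z _ => sq_nonneg _
    rcases eq_or_lt_of_le hB2 with hB20 | hB2pos
    · have k1 := key 1
      have k2 := key (-1)
      rw [← hB20] at k1 k2
      show B1 = 0
      nlinarith [k1, k2]
    · have hk := key (B1/B2)
      have hB2ne : B2 ≠ 0 := ne_of_gt hB2pos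
      have e : -(2*(B1/B2)) * B1 + (B1/B2)^2 * B2 = -(B1^2)/B2 := by
        field_simp
        ring
      rw [e] at hk
      have hle : B1 ^ 2 ≤ 0 := by
        have := (le_div_iff₀ hB2pos).1 hk
        linarith
      have h0 : B1 ^ 2 = 0 := le_antisymm hle (sq_nonneg B1)
      exact pow_eq_zero_iff (by norm_num : (2:ℕ) ≠ 0) |>.1 h0
  -- continuity facts
  have cf : Continuous fun z : EuclideanSpace ℝ (Fin N) => u (x + z) - u x :=
    hc1.sub continuous_const
  have cD : Continuous fun z : EuclideanSpace ℝ (Fin N) =>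
      u (x + z) - 2 * u x + u (x - z) := (hc1.sub continuous_const).add hc2
  -- the moment equations
  have hAval : ∀ p q : Fin N, ∫ z in sphere (0 : EuclideanSpace ℝ (Fin N)) h,
      (u (x + z) - u x) * (z p * z q) ∂μH[(N : ℝ) - 1]
      = (1/2) * (h ^ 4 * (μH[(N : ℝ) - 1]
            (sphere (0 : EuclideanSpace ℝ (Fin N)) h)).toReal / ((N : ℝ) * ((N : ℝ) + 2)))
        * ((if p = q then (∑ k, H' k k) else 0) + 2 * H' p q) := by
    intro p q
    have h0 := hfv p q
    have e1 : (fun z : EuclideanSpace ℝ (Fin N) => r z * (z p * z q)) = fun z =>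
        (u (x + z) - u x) * (z p * z q)
        - (∑ k, G' k * (z k * (z p * z q)))
        - (1/2) * ((∑ k, ∑ l, z k * H' k l * z l) * (z p * z q)) := by
      funext z
      have e2 : (∑ k, G' k * z k) * (z p * z q) = ∑ k, G' k * (z k * (z p * z q)) := by
        rw [Finset.sum_mul]
        exact Finset.sum_congr rfl fun k _ => by ring
      rw [hr, ← e2]
      ring
    rw [e1] at h0
    have ia : IntegrableOn (fun z : EuclideanSpace ℝ (Fin N) =>
        (u (x + z) - u x) * (z p * z q))
        (sphere (0 : EuclideanSpace ℝ (Fin N)) h) μH[(N : ℝ) - 1] :=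
      integrableOn_sphere _ h hfin _ (cf.mul ((contc p).mul (contc q)))
    have ib : IntegrableOn (fun z : EuclideanSpace ℝ (Fin N) =>
        ∑ k, G' k * (z k * (z p * z q)))
        (sphere (0 : EuclideanSpace ℝ (Fin N)) h) μH[(N : ℝ) - 1] :=
      integrableOn_sphere _ h hfin _ (by fun_prop)
    have iab : IntegrableOn (fun z : EuclideanSpace ℝ (Fin N) =>
        (u (x + z) - u x) * (z p * z q) - ∑ k, G' k * (z k * (z p * z q)))
        (sphere (0 : EuclideanSpace ℝ (Fin N)) h) μH[(N : ℝ) - 1] := ia.sub ib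
    have ic : IntegrableOn (fun z : EuclideanSpace ℝ (Fin N) =>
        (1/2) * ((∑ k, ∑ l, z k * H' k l * z l) * (z p * z q)))
        (sphere (0 : EuclideanSpace ℝ (Fin N)) h) μH[(N : ℝ) - 1] :=
      integrableOn_sphere _ h hfin _ (by fun_prop)
    rw [integral_sub iab ic, integral_sub ia ib, integral_const_mul] at h0
    have hmid : ∫ z in sphere (0 : EuclideanSpace ℝ (Fin N)) h,
        ∑ k, G' k * (z k * (z p * z q)) ∂μH[(N : ℝ) - 1] = 0 := by
      rw [integral_finset_sum _ (fun k _ => integrableOn_sphere _ h hfin _ (by fun_prop))]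
      refine Finset.sum_eq_zero fun k _ => ?_
      rw [integral_const_mul]
      have hodd : ∫ z in sphere (0 : EuclideanSpace ℝ (Fin N)) h,
          z k * (z p * z q) ∂μH[(N : ℝ) - 1] = 0 := by
        apply sphere_integral_zero_of_comp_neg ((N : ℝ) - 1) h negE
          (fun z => z k * (z p * z q))
        intro z
        beta_reduce
        rw [negE_apply, negE_apply, negE_apply]
        ring
      rw [hodd, mul_zero]
    have hquad : ∫ z in sphere (0 : EuclideanSpace ℝ (Fin N)) h,
        (∑ k, ∑ l, z k * H' k l * z l) * (z p * z q) ∂μH[(N : ℝ) - 1]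
        = (h ^ 4 * (μH[(N : ℝ) - 1]
            (sphere (0 : EuclideanSpace ℝ (Fin N)) h)).toReal / ((N : ℝ) * ((N : ℝ) + 2)))
          * ((if p = q then (∑ k, H' k k) else 0) + H' p q + H' q p) :=
      quad_mom hN h hh hfin H' p q
    have hsymH : H' q p = H' p q := hsym.apply p q
    rw [hmid, hquad, hsymH] at h0
    linarith
  -- trace identity
  have htr : h ^ 2 * ∫ z in sphere (0 : EuclideanSpace ℝ (Fin N)) h,
      (u (x + z) - u x) ∂μH[(N : ℝ) - 1]
      = (1/2) * (h ^ 4 * (μH[(N : ℝ) - 1]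
          (sphere (0 : EuclideanSpace ℝ (Fin N)) h)).toReal / ((N : ℝ) * ((N : ℝ) + 2)))
        * ((N : ℝ) + 2) * (∑ k, H' k k) := by
    have hsum : ∑ k, ∫ z in sphere (0 : EuclideanSpace ℝ (Fin N)) h,
        (u (x + z) - u x) * (z k * z k) ∂μH[(N : ℝ) - 1]
        = h ^ 2 * ∫ z in sphere (0 : EuclideanSpace ℝ (Fin N)) h,
            (u (x + z) - u x) ∂μH[(N : ℝ) - 1] := by
      rw [← integral_finset_sum (f := fun k z => (u (x + z) - u x) * (z k * z k)) _ (fun k _ => integrableOn_sphere _ h hfin _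
        (cf.mul ((contc k).mul (contc k))))]
      rw [setIntegral_congr_fun hmeas (g := fun z => (u (x + z) - u x) * h ^ 2)
        (fun z hz => ?_), integral_mul_const]
      · ring
      · beta_reduce
        rw [← Finset.mul_sum]
        congr 1
        rw [show ∑ k, z k * z k = ∑ k, (z k) ^ 2 from Finset.sum_congr rfl fun k _ => (sq (z k)).symm]
        exact norm_sq_on_sphere hz
    have hsum2 : ∑ k, ∫ z in sphere (0 : EuclideanSpace ℝ (Fin N)) h,
        (u (x + z) - u x) * (z k * z k) ∂μH[(N : ℝ) - 1]
        = (1/2) * (h ^ 4 * (μH[(N : ℝ) - 1]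
            (sphere (0 : EuclideanSpace ℝ (Fin N)) h)).toReal / ((N : ℝ) * ((N : ℝ) + 2)))
          * ((N : ℝ) * (∑ k, H' k k) + 2 * (∑ k, H' k k)) := by
      calc ∑ k, ∫ z in sphere (0 : EuclideanSpace ℝ (Fin N)) h,
          (u (x + z) - u x) * (z k * z k) ∂μH[(N : ℝ) - 1]
          = ∑ k : Fin N, (((1/2) * (h ^ 4 * (μH[(N : ℝ) - 1]
              (sphere (0 : EuclideanSpace ℝ (Fin N)) h)).toReal
                / ((N : ℝ) * ((N : ℝ) + 2))))
              * ((∑ m, H' m m) + 2 * H' k k)) := by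
            refine Finset.sum_congr rfl fun k _ => ?_
            rw [hAval k k]
            simp
        _ = ((1/2) * (h ^ 4 * (μH[(N : ℝ) - 1]
              (sphere (0 : EuclideanSpace ℝ (Fin N)) h)).toReal
                / ((N : ℝ) * ((N : ℝ) + 2))))
            * ((N : ℝ) * (∑ m, H' m m) + 2 * (∑ m, H' m m)) :=
            trace_sum _ (fun m => H' m m)
        _ = (1/2) * (h ^ 4 * (μH[(N : ℝ) - 1]
            (sphere (0 : EuclideanSpace ℝ (Fin N)) h)).toReal / ((N : ℝ) * ((N : ℝ) + 2)))
          * ((N : ℝ) * (∑ k, H' k k) + 2 * (∑ k, H' k k)) := by ring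
    rw [← hsum, hsum2]
    ring
  -- the target integral
  set δ : ℝ := if i = j then (1:ℝ) else 0 with hδ
  have iDzz : IntegrableOn (fun z : EuclideanSpace ℝ (Fin N) =>
      (u (x + z) - 2 * u x + u (x - z)) * (z i * z j))
      (sphere (0 : EuclideanSpace ℝ (Fin N)) h) μH[(N : ℝ) - 1] :=
    integrableOn_sphere _ h hfin _ (cD.mul ((contc i).mul (contc j)))
  have iD : IntegrableOn (fun z : EuclideanSpace ℝ (Fin N) =>
      u (x + z) - 2 * u x + u (x - z))
      (sphere (0 : EuclideanSpace ℝ (Fin N)) h) μH[(N : ℝ) - 1] :=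
    integrableOn_sphere _ h hfin _ cD
  have i1' : IntegrableOn (fun z : EuclideanSpace ℝ (Fin N) =>
      (1/h^4) * ((u (x + z) - 2 * u x + u (x - z)) * (z i * z j)))
      (sphere (0 : EuclideanSpace ℝ (Fin N)) h) μH[(N : ℝ) - 1] :=
    integrableOn_sphere _ h hfin _
      (continuous_const.mul (cD.mul ((contc i).mul (contc j))))
  have i2' : IntegrableOn (fun z : EuclideanSpace ℝ (Fin N) =>
      (δ/(((N : ℝ)+2)*h^2)) * (u (x + z) - 2 * u x + u (x - z)))
      (sphere (0 : EuclideanSpace ℝ (Fin N)) h) μH[(N : ℝ) - 1] :=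
    integrableOn_sphere _ h hfin _ (continuous_const.mul cD)
  have hJ1 : ∫ z in sphere (0 : EuclideanSpace ℝ (Fin N)) h,
      ((u (x + z) - 2 * u x + u (x - z)) / ‖z‖ ^ 2)
        * (z i * z j / ‖z‖ ^ 2 - δ / ((N : ℝ) + 2)) ∂μH[(N : ℝ) - 1]
      = (1/h^4) * (∫ z in sphere (0 : EuclideanSpace ℝ (Fin N)) h,
          (u (x + z) - 2 * u x + u (x - z)) * (z i * z j) ∂μH[(N : ℝ) - 1])
        - (δ/(((N : ℝ)+2)*h^2)) * (∫ z in sphere (0 : EuclideanSpace ℝ (Fin N)) h,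
            (u (x + z) - 2 * u x + u (x - z)) ∂μH[(N : ℝ) - 1]) := by
    rw [setIntegral_congr_fun hmeas (g := fun z =>
      (1/h^4) * ((u (x + z) - 2 * u x + u (x - z)) * (z i * z j))
      - (δ/(((N : ℝ)+2)*h^2)) * (u (x + z) - 2 * u x + u (x - z))) (fun z hz => by
        beta_reduce
        rw [mem_sphere_zero_iff_norm.1 hz]
        field_simp)]
    rw [integral_sub i1' i2', integral_const_mul, integral_const_mul]
  have hD1 : ∫ z in sphere (0 : EuclideanSpace ℝ (Fin N)) h,
      (u (x + z) - 2 * u x + u (x - z)) * (z i * z j) ∂μH[(N : ℝ) - 1]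
      = 2 * ∫ z in sphere (0 : EuclideanSpace ℝ (Fin N)) h,
          (u (x + z) - u x) * (z i * z j) ∂μH[(N : ℝ) - 1] := by
    have e : (fun z : EuclideanSpace ℝ (Fin N) =>
        (u (x + z) - 2 * u x + u (x - z)) * (z i * z j))
        = fun z => (u (x + z) - u x) * (z i * z j) + (u (x - z) - u x) * (z i * z j) :=
      funext fun z => by ring
    have ia2 : IntegrableOn (fun z : EuclideanSpace ℝ (Fin N) =>
        (u (x + z) - u x) * (z i * z j))
        (sphere (0 : EuclideanSpace ℝ (Fin N)) h) μH[(N : ℝ) - 1] :=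
      integrableOn_sphere _ h hfin _ (cf.mul ((contc i).mul (contc j)))
    have ib2 : IntegrableOn (fun z : EuclideanSpace ℝ (Fin N) =>
        (u (x - z) - u x) * (z i * z j))
        (sphere (0 : EuclideanSpace ℝ (Fin N)) h) μH[(N : ℝ) - 1] :=
      integrableOn_sphere _ h hfin _ ((hc2.sub continuous_const).mul ((contc i).mul (contc j)))
    rw [e, integral_add ia2 ib2]
    have hcomp := sphere_integral_comp ((N : ℝ) - 1) h negE
      (fun w => (u (x + w) - u x) * (w i * w j))
    have e2 : (fun z : EuclideanSpace ℝ (Fin N) =>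
        (fun w : EuclideanSpace ℝ (Fin N) => (u (x + w) - u x) * (w i * w j)) (negE z))
        = fun z => (u (x - z) - u x) * (z i * z j) := by
      funext z
      show (u (x + negE z) - u x) * (negE z i * negE z j) = _
      have hxz : x + negE z = x - z := by
        rw [show (negE z : EuclideanSpace ℝ (Fin N)) = -z from rfl, ← sub_eq_add_neg]
      rw [hxz, negE_apply, negE_apply]
      ring
    rw [e2] at hcomp
    rw [hcomp]
    ring
  have hD2 : ∫ z in sphere (0 : EuclideanSpace ℝ (Fin N)) h,
      (u (x + z) - 2 * u x + u (x - z)) ∂μH[(N : ℝ) - 1]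
      = 2 * ∫ z in sphere (0 : EuclideanSpace ℝ (Fin N)) h,
          (u (x + z) - u x) ∂μH[(N : ℝ) - 1] := by
    have e : (fun z : EuclideanSpace ℝ (Fin N) => u (x + z) - 2 * u x + u (x - z))
        = fun z => (u (x + z) - u x) + (u (x - z) - u x) :=
      funext fun z => by ring
    have ia2 : IntegrableOn (fun z : EuclideanSpace ℝ (Fin N) => u (x + z) - u x)
        (sphere (0 : EuclideanSpace ℝ (Fin N)) h) μH[(N : ℝ) - 1] :=
      integrableOn_sphere _ h hfin _ cf
    have ib2 : IntegrableOn (fun z : EuclideanSpace ℝ (Fin N) => u (x - z) - u x)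
        (sphere (0 : EuclideanSpace ℝ (Fin N)) h) μH[(N : ℝ) - 1] :=
      integrableOn_sphere _ h hfin _ (hc2.sub continuous_const)
    rw [e, integral_add ia2 ib2]
    have hcomp := sphere_integral_comp ((N : ℝ) - 1) h negE
      (fun w => u (x + w) - u x)
    have e2 : (fun z : EuclideanSpace ℝ (Fin N) =>
        (fun w : EuclideanSpace ℝ (Fin N) => u (x + w) - u x) (negE z))
        = fun z => u (x - z) - u x := by
      funext z
      show u (x + negE z) - u x = _
      rw [show x + negE z = x - z from by
        rw [show (negE z : EuclideanSpace ℝ (Fin N)) = -z from rfl, ← sub_eq_add_neg]]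
    rw [e2] at hcomp
    rw [hcomp]
    ring
  have hFval : ∫ z in sphere (0 : EuclideanSpace ℝ (Fin N)) h,
      (u (x + z) - u x) ∂μH[(N : ℝ) - 1]
      = (1/2) * (h ^ 4 * (μH[(N : ℝ) - 1]
          (sphere (0 : EuclideanSpace ℝ (Fin N)) h)).toReal / ((N : ℝ) * ((N : ℝ) + 2)))
        * ((N : ℝ) + 2) * (∑ k, H' k k) / h ^ 2 := by
    rw [eq_div_iff (pow_ne_zero 2 hne)]
    linarith [htr]
  have hifmul : (if i = j then (∑ k, H' k k) else 0) = δ * (∑ k, H' k k) := by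
    rw [hδ]
    split_ifs <;> ring
  have hS1pos : 0 < (μH[(N : ℝ) - 1] (sphere (0 : EuclideanSpace ℝ (Fin N)) 1)).toReal :=
    ENNReal.toReal_pos (sphere_meas_pos hN) (sphere_one_ne_top hN h hh hfin)
  rw [hJ1, hD1, hD2, hAval i j, hFval, hifmul, sphere_scale_toReal hN h hh]
  have hpow : h ^ (N - 1) ≠ 0 := pow_ne_zero _ hne
  field_simp
  ring
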